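/- The map A(ξ₁,ξ₂) = (ξ₁ + ξ₁ξ₂(1−ξ₁)/2, ξ₂ + ξ₁ξ₂(1−ξ₂)/2) (the CE map) has Jacobian determinant strictly positive on the closed unit square [0,1]², and hence is a local diffeomorphism there. -/

import Mathlib

set_option autoImplicit false

open Matrix ContinuousLinearMap

private noncomputable def L1 (ξ : ℝ × ℝ) : ℝ × ℝ →L[ℝ] ℝ :=
  (1 + ξ.2 * (1 - 2*ξ.1) / 2) • fst ℝ ℝ ℝ + (ξ.1 * (1 - ξ.1) / 2) • snd ℝ ℝ ℝ

private noncomputable def L2 (ξ : ℝ × ℝ) : ℝ × ℝ →L[ℝ] ℝ :=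
  (ξ.2 * (1 - ξ.2) / 2) • fst ℝ ℝ ℝ + (1 + ξ.1 * (1 - 2*ξ.2) / 2) • snd ℝ ℝ ℝ

private lemma hsd1 (ξ : ℝ × ℝ) :
    HasStrictFDerivAt (fun p : ℝ × ℝ => p.1 + p.1 * p.2 * (1 - p.1) / 2) (L1 ξ) ξ := by
  have h1 : HasStrictFDerivAt (fun p : ℝ × ℝ => p.1) (fst ℝ ℝ ℝ) ξ := hasStrictFDerivAt_fst
  have h2 : HasStrictFDerivAt (fun p : ℝ × ℝ => p.2) (snd ℝ ℝ ℝ) ξ := hasStrictFDerivAt_snd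
  have hc : HasStrictFDerivAt (fun _ : ℝ × ℝ => (1:ℝ)) (0 : ℝ × ℝ →L[ℝ] ℝ) ξ := hasStrictFDerivAt_const _ _
  have hc2 : HasStrictFDerivAt (fun _ : ℝ × ℝ => ((2:ℝ)⁻¹)) (0 : ℝ × ℝ →L[ℝ] ℝ) ξ := hasStrictFDerivAt_const _ _
  have h := (h1.add (((h1.mul h2).mul (hc.sub h1)).mul hc2))
  have hfun : (fun p : ℝ × ℝ => p.1 + p.1 * p.2 * (1 - p.1) * 2⁻¹)
      = (fun p : ℝ × ℝ => p.1 + p.1 * p.2 * (1 - p.1) / 2) := by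
    funext p; ring
  replace h : HasStrictFDerivAt (fun p : ℝ × ℝ => p.1 + p.1 * p.2 * (1 - p.1) * 2⁻¹) _ ξ := h
  rw [hfun] at h
  refine HasStrictFDerivAt.congr_fderiv h ?_
  ext <;> simp [L1] <;> ring

private lemma hsd2 (ξ : ℝ × ℝ) :
    HasStrictFDerivAt (fun p : ℝ × ℝ => p.2 + p.1 * p.2 * (1 - p.2) / 2) (L2 ξ) ξ := by
  have h1 : HasStrictFDerivAt (fun p : ℝ × ℝ => p.1) (fst ℝ ℝ ℝ) ξ := hasStrictFDerivAt_fst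
  have h2 : HasStrictFDerivAt (fun p : ℝ × ℝ => p.2) (snd ℝ ℝ ℝ) ξ := hasStrictFDerivAt_snd
  have hc : HasStrictFDerivAt (fun _ : ℝ × ℝ => (1:ℝ)) (0 : ℝ × ℝ →L[ℝ] ℝ) ξ := hasStrictFDerivAt_const _ _
  have hc2 : HasStrictFDerivAt (fun _ : ℝ × ℝ => ((2:ℝ)⁻¹)) (0 : ℝ × ℝ →L[ℝ] ℝ) ξ := hasStrictFDerivAt_const _ _
  have h := (h2.add (((h1.mul h2).mul (hc.sub h2)).mul hc2))
  have hfun : (fun p : ℝ × ℝ => p.2 + p.1 * p.2 * (1 - p.2) * 2⁻¹)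
      = (fun p : ℝ × ℝ => p.2 + p.1 * p.2 * (1 - p.2) / 2) := by
    funext p; ring
  replace h : HasStrictFDerivAt (fun p : ℝ × ℝ => p.2 + p.1 * p.2 * (1 - p.2) * 2⁻¹) _ ξ := h
  rw [hfun] at h
  refine HasStrictFDerivAt.congr_fderiv h ?_
  ext <;> simp [L2] <;> ring

private lemma key (x y : ℝ) (hx0 : 0 ≤ x) (hx1 : x ≤ 1) (hy0 : 0 ≤ y) (hy1 : y ≤ 1) :
    0 < (1 + y * (1 - 2*x) / 2) * (1 + x * (1 - 2*y) / 2) - x * (1 - x) / 2 * (y * (1 - y) / 2) := by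
  nlinarith [mul_nonneg hx0 hy0, mul_nonneg (mul_nonneg hx0 hy0) (mul_nonneg hx0 hy0),
    sq_nonneg (x - y), sq_nonneg (x*y), mul_nonneg (sub_nonneg.2 hx1) (sub_nonneg.2 hy1),
    mul_nonneg hx0 (sub_nonneg.2 hy1), mul_nonneg hy0 (sub_nonneg.2 hx1)]

/-- the CE map
`A(ξ₁,ξ₂) = (ξ₁ + ξ₁ξ₂(1−ξ₁)/2, ξ₂ + ξ₁ξ₂(1−ξ₂)/2)` has strictly positive Jacobian
determinant on the closed unit square `[0,1]²`, and hence is a local diffeomorphism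
there (locally injective around each interior point). -/
theorem stmt14
    (A : ℝ × ℝ → ℝ × ℝ)
    (hA : ∀ ξ : ℝ × ℝ, A ξ =
      (ξ.1 + ξ.1 * ξ.2 * (1 - ξ.1) / 2, ξ.2 + ξ.1 * ξ.2 * (1 - ξ.2) / 2)) :
    (∀ ξ ∈ Set.Icc ((0 : ℝ), (0 : ℝ)) ((1 : ℝ), (1 : ℝ)),
      0 < (!![fderiv ℝ (fun p => (A p).1) ξ (1, 0),
              fderiv ℝ (fun p => (A p).1) ξ (0, 1);
              fderiv ℝ (fun p => (A p).2) ξ (1, 0),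
              fderiv ℝ (fun p => (A p).2) ξ (0, 1)]).det) ∧
    (∀ ξ ∈ Set.Ioo ((0 : ℝ), (0 : ℝ)) ((1 : ℝ), (1 : ℝ)),
      ∃ u ∈ nhds ξ, Set.InjOn A u) := by
  have hA1 : (fun p => (A p).1) = fun p : ℝ × ℝ => p.1 + p.1 * p.2 * (1 - p.1) / 2 := by
    funext p; rw [hA p]
  have hA2 : (fun p => (A p).2) = fun p : ℝ × ℝ => p.2 + p.1 * p.2 * (1 - p.2) / 2 := by
    funext p; rw [hA p]
  constructor
  · intro ξ hξ
    obtain ⟨⟨hx0, hy0⟩, hx1, hy1⟩ := hξ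
    rw [hA1, hA2, (hsd1 ξ).hasFDerivAt.fderiv, (hsd2 ξ).hasFDerivAt.fderiv]
    rw [Matrix.det_fin_two_of]
    simp [L1, L2]
    have := key ξ.1 ξ.2 hx0 hx1 hy0 hy1
    linarith
  · intro ξ hξ
    have hξ' := Set.Ioo_subset_Icc_self hξ
    obtain ⟨⟨hx0, hy0⟩, hx1, hy1⟩ := hξ'
    have hAP : A = fun p : ℝ × ℝ =>
        (p.1 + p.1 * p.2 * (1 - p.1) / 2, p.2 + p.1 * p.2 * (1 - p.2) / 2) := by
      funext p; rw [hA p]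
    have hD : HasStrictFDerivAt A ((L1 ξ).prod (L2 ξ)) ξ := by
      rw [hAP]; exact HasStrictFDerivAt.prodMk (hsd1 ξ) (hsd2 ξ)
    have hdet : 0 < (1 + ξ.2 * (1 - 2*ξ.1) / 2) * (1 + ξ.1 * (1 - 2*ξ.2) / 2)
        - ξ.1 * (1 - ξ.1) / 2 * (ξ.2 * (1 - ξ.2) / 2) := key ξ.1 ξ.2 hx0 hx1 hy0 hy1
    have hinj : Function.Injective ((L1 ξ).prod (L2 ξ)) := by
      intro v w hvw
      have e1 : v.1 * (1 + ξ.2 * (1 - ξ.1 * 2) / 2) + v.2 * (ξ.1 * (1 - ξ.1) / 2)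
          = w.1 * (1 + ξ.2 * (1 - ξ.1 * 2) / 2) + w.2 * (ξ.1 * (1 - ξ.1) / 2) := by
        have := congrArg Prod.fst hvw
        simpa [L1, ContinuousLinearMap.prod_apply, mul_comm] using this
      have e2 : v.1 * (ξ.2 * (1 - ξ.2) / 2) + v.2 * (1 + ξ.1 * (1 - ξ.2 * 2) / 2)
          = w.1 * (ξ.2 * (1 - ξ.2) / 2) + w.2 * (1 + ξ.1 * (1 - ξ.2 * 2) / 2) := by
        have := congrArg Prod.snd hvw
        simpa [L2, ContinuousLinearMap.prod_apply, mul_comm] using this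
      have h1 : ((1 + ξ.2 * (1 - 2*ξ.1) / 2) * (1 + ξ.1 * (1 - 2*ξ.2) / 2)
          - ξ.1 * (1 - ξ.1) / 2 * (ξ.2 * (1 - ξ.2) / 2)) * (v.1 - w.1) = 0 := by
        linear_combination (1 + ξ.1 * (1 - 2*ξ.2) / 2) * e1 - (ξ.1 * (1 - ξ.1) / 2) * e2
      have h2 : ((1 + ξ.2 * (1 - 2*ξ.1) / 2) * (1 + ξ.1 * (1 - 2*ξ.2) / 2)
          - ξ.1 * (1 - ξ.1) / 2 * (ξ.2 * (1 - ξ.2) / 2)) * (v.2 - w.2) = 0 := by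
        linear_combination (1 + ξ.2 * (1 - 2*ξ.1) / 2) * e2 - (ξ.2 * (1 - ξ.2) / 2) * e1
      have hv1 : v.1 = w.1 := by
        rcases mul_eq_zero.1 h1 with h | h
        · exact absurd h hdet.ne'
        · linarith
      have hv2 : v.2 = w.2 := by
        rcases mul_eq_zero.1 h2 with h | h
        · exact absurd h hdet.ne'
        · linarith
      exact Prod.ext hv1 hv2
    have hsurj : Function.Surjective ((L1 ξ).prod (L2 ξ)).toLinearMap :=
      LinearMap.injective_iff_surjective.mp hinj
    let E : (ℝ × ℝ) ≃L[ℝ] (ℝ × ℝ) :=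
      (LinearEquiv.ofBijective ((L1 ξ).prod (L2 ξ)).toLinearMap
        ⟨hinj, hsurj⟩).toContinuousLinearEquiv
    have hE : (E : (ℝ × ℝ) →L[ℝ] (ℝ × ℝ)) = (L1 ξ).prod (L2 ξ) := by
      ext <;> rfl
    have hD' : HasStrictFDerivAt A (E : (ℝ × ℝ) →L[ℝ] (ℝ × ℝ)) ξ := by rw [hE]; exact hD
    refine ⟨(HasStrictFDerivAt.toOpenPartialHomeomorph A hD').source,
      (HasStrictFDerivAt.toOpenPartialHomeomorph A hD').open_source.mem_nhds (HasStrictFDerivAt.mem_toOpenPartialHomeomorph_source hD'), ?_⟩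
    have := (HasStrictFDerivAt.toOpenPartialHomeomorph A hD').injOn
    rwa [HasStrictFDerivAt.toOpenPartialHomeomorph_coe hD'] at this
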